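/- Let n ≥ 1, let d_1 ≤ ... ≤ d_k be positive integers with d_1 + ... + d_k = n(n+1)/2, and let G be the reduced bipartite graph with degree sequence (d_1,...,d_k). If G admits a star-forest ascending subgraph decomposition with the centers of the stars in X, then there exists an ascending matrix A ∈ N((d_1,...,d_k), (1,2,...,n)) such that the coloring data encoded by A admits a sequential coloring for X, i.e., there are finite sets S_{ij} ⊆ {1,2,3,...} with |S_{ij}| = a_{ij} for all 1 ≤ i ≤ k and 1 ≤ j ≤ n, such that for each fixed j the sets S_{1j},...,S_{kj} are pairwise disjoint, and for each fixed i the sets S_{i1},...,S_{in} are pairwise disjoint with union exactly {1,...,d_i}. -/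

import Mathlib

open Finset

/-- The degree in the bipartite edge set `E` of a vertex `x` of the part `X = Fin k`. -/
def Xdeg {k m : ℕ} (E : Finset (Fin k × Fin m)) (x : Fin k) : ℕ :=
  (E.filter fun e => e.1 = x).card

/-- The degree in the bipartite edge set `E` of a vertex `y` of the part `Y = Fin m`. -/
def Ydeg {k m : ℕ} (E : Finset (Fin k × Fin m)) (y : Fin m) : ℕ :=
  (E.filter fun e => e.2 = y).card

/-- A star forest with centers in `X`: every vertex of `Y` has degree at most one. -/
def IsStarForest {k m : ℕ} (F : Finset (Fin k × Fin m)) : Prop :=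
  ∀ y : Fin m, Ydeg F y ≤ 1

/-- The simple graph on the vertex set `Fin k ⊕ Fin m` determined by a set of
bipartite edges. -/
def toGraph {k m : ℕ} (F : Finset (Fin k × Fin m)) : SimpleGraph (Fin k ⊕ Fin m) where
  Adj u v := (∃ x y, u = Sum.inl x ∧ v = Sum.inr y ∧ (x, y) ∈ F) ∨
             (∃ x y, v = Sum.inl x ∧ u = Sum.inr y ∧ (x, y) ∈ F)
  symm := ⟨fun _ _ h => Or.symm h⟩
  loopless := by
    constructor
    rintro u (⟨x, y, rfl, h, -⟩ | ⟨x, y, rfl, h, -⟩) <;> exact Sum.inl_ne_inr h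

/-- `F` is isomorphic to a subgraph of `F'`: there is an injective map of vertices
carrying edges to edges. -/
def IsoToSubgraph {k m k' m' : ℕ} (F : Finset (Fin k × Fin m))
    (F' : Finset (Fin k' × Fin m')) : Prop :=
  ∃ f : Fin k ⊕ Fin m → Fin k' ⊕ Fin m',
    Function.Injective f ∧ ∀ u v, (toGraph F).Adj u v → (toGraph F').Adj (f u) (f v)

/-- `c ⪯ c'` : after reordering the components of each vector in nondecreasing order,
each component of `c` is at most the corresponding component of `c'`. -/
def Prec {k : ℕ} (c c' : Fin k → ℕ) : Prop :=
  ∀ i : Fin k, c (Tuple.sort c i) ≤ c' (Tuple.sort c' i)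

/-- A star-forest ascending subgraph decomposition of the edge set `E`:
the `F i` partition `E`, `F i` has `i + 1` edges (`1`-based: `i` edges),
every `F i` is a star forest with centers in `X`, and each `F i` is isomorphic
to a subgraph of the next one. -/
def StarForestASD {k m n : ℕ} (E : Finset (Fin k × Fin m))
    (F : Fin n → Finset (Fin k × Fin m)) : Prop :=
  (∀ i j, i ≠ j → Disjoint (F i) (F j)) ∧
  Finset.univ.biUnion F = E ∧
  (∀ i, (F i).card = (i : ℕ) + 1) ∧
  (∀ i, IsStarForest (F i)) ∧
  ∀ j : ℕ, (h : j + 1 < n) → IsoToSubgraph (F ⟨j, Nat.lt_of_succ_lt h⟩) (F ⟨j + 1, h⟩)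

/-- The reduced bipartite graph with (1-based) degree sequence `d 1 ≤ ⋯ ≤ d k`:
`x i` is adjacent exactly to `y 1, …, y (d i)`. -/
def reducedEdges (k : ℕ) (d : ℕ → ℕ) : Finset (Fin k × Fin (d k)) :=
  Finset.univ.filter fun e => (e.2 : ℕ) + 1 ≤ d ((e.1 : ℕ) + 1)

/-- The columns of `A` satisfy `A_1 ⪯ A_2 ⪯ ⋯ ⪯ A_n`. -/
def AscendingCols {k n : ℕ} (A : Matrix (Fin k) (Fin n) ℕ) : Prop :=
  ∀ j : ℕ, (h : j + 1 < n) →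
    Prec (fun i => A i ⟨j, Nat.lt_of_succ_lt h⟩) (fun i => A i ⟨j + 1, h⟩)

/-- A sequential coloring of the bipartite multigraph encoded by the matrix `A`:
the parallel edge class joining `x i` and `z j` receives the set `S i j` of colors,
the coloring is proper, and the edges at `x i` receive exactly colors `{1, …, d i}`. -/
def SeqColoring {k n : ℕ} (A : Matrix (Fin k) (Fin n) ℕ) (d : Fin k → ℕ)
    (S : Fin k → Fin n → Finset ℕ) : Prop :=
  (∀ i j, (S i j).card = A i j) ∧
  (∀ j : Fin n, ∀ i i' : Fin k, i ≠ i' → Disjoint (S i j) (S i' j)) ∧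
  (∀ i : Fin k, ∀ j j' : Fin n, j ≠ j' → Disjoint (S i j) (S i j')) ∧
  (∀ i : Fin k, Finset.univ.biUnion (fun j => S i j) = Finset.Icc 1 (d i))

section Helpers

variable {k m : ℕ}

lemma Xdeg_eq (F : Finset (Fin k × Fin m)) (x : Fin k) :
    Xdeg F x = (univ.filter fun y => (x, y) ∈ F).card := by
  unfold Xdeg
  apply Finset.card_bij (fun e _ => e.2)
  · rintro ⟨a, b⟩ he
    simp only [Finset.mem_filter] at he ⊢
    obtain ⟨h1, rfl⟩ := he
    exact ⟨mem_univ _, h1⟩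
  · rintro ⟨a, b⟩ ha ⟨c, e⟩ hc h
    simp only [Finset.mem_filter] at ha hc
    simp_all
  · intro y hy
    simp only [Finset.mem_filter] at hy
    exact ⟨(x, y), Finset.mem_filter.2 ⟨hy.2, rfl⟩, rfl⟩

lemma Ydeg_eq (F : Finset (Fin k × Fin m)) (y : Fin m) :
    Ydeg F y = (univ.filter fun x => (x, y) ∈ F).card := by
  unfold Ydeg
  apply Finset.card_bij (fun e _ => e.1)
  · rintro ⟨a, b⟩ he
    simp only [Finset.mem_filter] at he ⊢
    obtain ⟨h1, rfl⟩ := he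
    exact ⟨mem_univ _, h1⟩
  · rintro ⟨a, b⟩ ha ⟨c, e⟩ hc h
    simp only [Finset.mem_filter] at ha hc
    simp_all
  · intro x hx
    simp only [Finset.mem_filter] at hx
    exact ⟨(x, y), Finset.mem_filter.2 ⟨hx.2, rfl⟩, rfl⟩

lemma adj_inl {F : Finset (Fin k × Fin m)} {x : Fin k} {v : Fin k ⊕ Fin m}
    (h : (toGraph F).Adj (Sum.inl x) v) : ∃ y, v = Sum.inr y ∧ (x, y) ∈ F := by
  rcases h with ⟨a, b, h1, h2, h3⟩ | ⟨a, b, h1, h2, h3⟩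
  · obtain rfl : x = a := by injection h1
    exact ⟨b, h2, h3⟩
  · exact absurd h2 (by simp)

lemma adj_inr {F : Finset (Fin k × Fin m)} {y : Fin m} {v : Fin k ⊕ Fin m}
    (h : (toGraph F).Adj (Sum.inr y) v) : ∃ x, v = Sum.inl x ∧ (x, y) ∈ F := by
  rcases h with ⟨a, b, h1, h2, h3⟩ | ⟨a, b, h1, h2, h3⟩
  · exact absurd h1 (by simp)
  · obtain rfl : y = b := by injection h2
    exact ⟨a, h1, h3⟩

lemma adj_mk {F : Finset (Fin k × Fin m)} {x : Fin k} {y : Fin m} (h : (x, y) ∈ F) :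
    (toGraph F).Adj (Sum.inl x) (Sum.inr y) :=
  Or.inl ⟨x, y, rfl, rfl, h⟩

lemma two_le_Ydeg {F : Finset (Fin k × Fin m)} {x x' : Fin k} {y : Fin m}
    (h : (x, y) ∈ F) (h' : (x', y) ∈ F) (hne : x ≠ x') : 2 ≤ Ydeg F y := by
  rw [Ydeg_eq]
  refine Finset.one_lt_card.2 ⟨x, ?_, x', ?_, hne⟩ <;> simp [h, h']

end Helpers
section Count

variable {k m : ℕ} {F F' : Finset (Fin k × Fin m)} {f : Fin k ⊕ Fin m → Fin k ⊕ Fin m}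

lemma degA (hinj : Function.Injective f)
    (hadj : ∀ u v, (toGraph F).Adj u v → (toGraph F').Adj (f u) (f v))
    {x x' : Fin k} (hx : f (Sum.inl x) = Sum.inl x') :
    Xdeg F x ≤ Xdeg F' x' := by
  rw [Xdeg_eq, Xdeg_eq]
  apply Finset.card_le_card_of_injOn (fun y => Sum.elim (fun _ => y) id (f (Sum.inr y)))
  · intro y hy
    simp only [Finset.mem_coe, Finset.mem_filter, Finset.mem_univ, true_and] at hy ⊢
    have h := hadj _ _ (adj_mk hy)
    rw [hx] at h
    obtain ⟨y', hy', hmem⟩ := adj_inl h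
    simp [hy', hmem]
  · intro y1 h1 y2 h2 heq
    simp only [Finset.coe_filter, Set.mem_setOf_eq] at h1 h2
    have g1 := hadj _ _ (adj_mk h1.2); rw [hx] at g1
    have g2 := hadj _ _ (adj_mk h2.2); rw [hx] at g2
    obtain ⟨y1', e1, -⟩ := adj_inl g1
    obtain ⟨y2', e2, -⟩ := adj_inl g2
    simp only [e1, e2, Sum.elim_inr, id_eq] at heq
    exact Sum.inr.inj (hinj (by rw [e1, e2, heq]))
  
lemma degB (hinj : Function.Injective f)
    (hadj : ∀ u v, (toGraph F).Adj u v → (toGraph F').Adj (f u) (f v))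
    {x : Fin k} {y' : Fin m} (hx : f (Sum.inl x) = Sum.inr y') :
    Xdeg F x ≤ Ydeg F' y' := by
  rw [Xdeg_eq, Ydeg_eq]
  apply Finset.card_le_card_of_injOn (fun y => Sum.elim id (fun _ => x) (f (Sum.inr y)))
  · intro y hy
    simp only [Finset.mem_coe, Finset.mem_filter, Finset.mem_univ, true_and] at hy ⊢
    have h := hadj _ _ (adj_mk hy)
    rw [hx] at h
    obtain ⟨x', hx', hmem⟩ := adj_inr h
    simp [hx', hmem]
  · intro y1 h1 y2 h2 heq
    simp only [Finset.coe_filter, Set.mem_setOf_eq] at h1 h2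
    have g1 := hadj _ _ (adj_mk h1.2); rw [hx] at g1
    have g2 := hadj _ _ (adj_mk h2.2); rw [hx] at g2
    obtain ⟨x1', e1, -⟩ := adj_inr g1
    obtain ⟨x2', e2, -⟩ := adj_inr g2
    simp only [e1, e2, Sum.elim_inl, id_eq] at heq
    exact Sum.inr.inj (hinj (by rw [e1, e2, heq]))

lemma count_le (hF : IsStarForest F) (hF' : IsStarForest F')
    (hiso : IsoToSubgraph F F') (t : ℕ) :
    (univ.filter fun x => t ≤ Xdeg F x).card ≤
      (univ.filter fun x => t ≤ Xdeg F' x).card := by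
  obtain ⟨f, hinj, hadj⟩ := hiso
  rcases t with _ | t
  · simp
  rcases t with _ | t
  · -- t = 1 : matching argument
    have key : ∀ x : Fin k, ∃ a : Fin k, x ∈ (univ.filter fun x => 1 ≤ Xdeg F x) →
        (1 ≤ Xdeg F' a) ∧ ∃ w, f w = Sum.inl a ∧
          (w = Sum.inl x ∨ ∃ y, (x, y) ∈ F ∧ w = Sum.inr y) := by
      intro x
      by_cases hx : x ∈ (univ.filter fun x => 1 ≤ Xdeg F x)
      · simp only [Finset.mem_filter, Finset.mem_univ, true_and, Xdeg_eq] at hx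
        obtain ⟨y, hy⟩ := Finset.card_pos.1 hx
        simp only [Finset.mem_filter, Finset.mem_univ, true_and] at hy
        have h := hadj _ _ (adj_mk hy)
        rcases h with ⟨a, b, h1, h2, h3⟩ | ⟨a, b, h1, h2, h3⟩
        · refine ⟨a, fun _ => ⟨?_, Sum.inl x, h1, Or.inl rfl⟩⟩
          rw [Xdeg_eq]
          exact Finset.card_pos.2 ⟨b, by simp [h3]⟩
        · refine ⟨a, fun _ => ⟨?_, Sum.inr y, h1, Or.inr ⟨y, hy, rfl⟩⟩⟩
          rw [Xdeg_eq]
          exact Finset.card_pos.2 ⟨b, by simp [h3]⟩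
      · exact ⟨x, fun h => absurd h hx⟩
    choose g hg using key
    apply Finset.card_le_card_of_injOn g
    · intro x hx
      simp only [Finset.mem_coe, Finset.mem_filter, Finset.mem_univ, true_and]
      exact ((hg x) hx).1
    · intro x1 h1 x2 h2 heq
      simp only [Finset.coe_filter, Set.mem_setOf_eq] at h1 h2
      have m1 : x1 ∈ (univ.filter fun x => 1 ≤ Xdeg F x) := by simp [h1]
      have m2 : x2 ∈ (univ.filter fun x => 1 ≤ Xdeg F x) := by simp [h2]
      obtain ⟨-, w1, hw1, hc1⟩ := hg x1 m1
      obtain ⟨-, w2, hw2, hc2⟩ := hg x2 m2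
      have hww : w1 = w2 := hinj (by rw [hw1, hw2, heq])
      rcases hc1 with rfl | ⟨y1, hy1, rfl⟩ <;> rcases hc2 with rfl | ⟨y2, hy2, rfl⟩
      · exact Sum.inl.inj hww
      · exact absurd hww (by simp)
      · exact absurd hww (by simp)
      · obtain rfl : y1 = y2 := Sum.inr.inj hww
        by_contra hne
        have h2le := two_le_Ydeg hy1 hy2 hne
        have := hF y1
        omega
  · -- t ≥ 2
    have key : ∀ x : Fin k, ∃ a : Fin k,
        x ∈ (univ.filter fun x => t + 2 ≤ Xdeg F x) →
        (t + 2 ≤ Xdeg F' a) ∧ f (Sum.inl x) = Sum.inl a := by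
      intro x
      by_cases hx : x ∈ (univ.filter fun x => t + 2 ≤ Xdeg F x)
      · simp only [Finset.mem_filter, Finset.mem_univ, true_and] at hx
        rcases hfx : f (Sum.inl x) with a | y'
        · exact ⟨a, fun _ => ⟨le_trans hx (degA hinj hadj hfx), rfl⟩⟩
        · have h1 := le_trans hx (degB hinj hadj hfx)
          have h2 := hF' y'
          omega
      · exact ⟨x, fun h => absurd h hx⟩
    choose g hg using key
    show (univ.filter fun x => t + 2 ≤ Xdeg F x).card ≤
      (univ.filter fun x => t + 2 ≤ Xdeg F' x).card
    apply Finset.card_le_card_of_injOn g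
    · intro x hx
      simp only [Finset.mem_coe, Finset.mem_filter, Finset.mem_univ, true_and]
      exact ((hg x) hx).1
    · intro x1 h1 x2 h2 heq
      simp only [Finset.coe_filter, Set.mem_setOf_eq] at h1 h2
      have m1 : x1 ∈ (univ.filter fun x => t + 2 ≤ Xdeg F x) := by simp [h1]
      have m2 : x2 ∈ (univ.filter fun x => t + 2 ≤ Xdeg F x) := by simp [h2]
      have e1 := (hg x1 m1).2
      have e2 := (hg x2 m2).2
      exact Sum.inl.inj (hinj (by rw [e1, e2, heq]))

end Count
section Prec

variable {k : ℕ}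

lemma card_filter_perm (σ : Equiv.Perm (Fin k)) (p : Fin k → Prop) [DecidablePred p] :
    (univ.filter fun i => p (σ i)).card = (univ.filter p).card := by
  apply Finset.card_bij (fun i _ => σ i)
  · intro i hi
    simp only [Finset.mem_filter, Finset.mem_univ, true_and] at hi ⊢
    exact hi
  · intro a _ b _ h
    exact σ.injective h
  · intro j hj
    simp only [Finset.mem_filter, Finset.mem_univ, true_and] at hj
    exact ⟨σ.symm j, by simp [hj], by simp⟩

lemma prec_of_counts (c c' : Fin k → ℕ)
    (h : ∀ t, (univ.filter fun i => t ≤ c i).card ≤ (univ.filter fun i => t ≤ c' i).card) :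
    Prec c c' := by
  intro i
  by_contra hlt
  push_neg at hlt
  set t := c (Tuple.sort c i) with ht
  have hu : Monotone (c ∘ Tuple.sort c) := Tuple.monotone_sort c
  have hv : Monotone (c' ∘ Tuple.sort c') := Tuple.monotone_sort c'
  have h1 : Finset.Ici i ⊆ univ.filter fun r => t ≤ c (Tuple.sort c r) := by
    intro r hr
    simp only [Finset.mem_Ici] at hr
    simp only [Finset.mem_filter, Finset.mem_univ, true_and]
    exact hu hr
  have h2 : (univ.filter fun r => t ≤ c' (Tuple.sort c' r)) ⊆ Finset.Ioi i := by
    intro r hr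
    simp only [Finset.mem_filter, Finset.mem_univ, true_and] at hr
    simp only [Finset.mem_Ioi]
    by_contra hri
    push_neg at hri
    exact absurd (le_trans hr (hv hri)) (not_le.2 hlt)
  have c1 : k - (i : ℕ) ≤ (univ.filter fun r => t ≤ c (Tuple.sort c r)).card := by
    calc k - (i : ℕ) = (Finset.Ici i).card := (Fin.card_Ici i).symm
    _ ≤ _ := Finset.card_le_card h1
  have c2 : (univ.filter fun r => t ≤ c' (Tuple.sort c' r)).card ≤ k - 1 - (i : ℕ) := by
    calc _ ≤ (Finset.Ioi i).card := Finset.card_le_card h2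
    _ = k - 1 - (i : ℕ) := Fin.card_Ioi i
  rw [card_filter_perm (Tuple.sort c) (fun r => t ≤ c r)] at c1
  rw [card_filter_perm (Tuple.sort c') (fun r => t ≤ c' r)] at c2
  have := h t
  have hik := i.isLt
  omega

end Prec
lemma card_fin_lt {m c : ℕ} (h : c ≤ m) :
    (univ.filter fun y : Fin m => (y : ℕ) < c).card = c := by
  have : (univ.filter fun y : Fin m => (y : ℕ) < c).card = (Finset.range c).card := by
    refine Finset.card_bij (fun (y : Fin m) (_ : y ∈ univ.filter fun y : Fin m => (y : ℕ) < c) => (y : ℕ)) ?_ ?_ ?_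
    · intro y hy
      simp only [Finset.mem_filter, Finset.mem_univ, true_and] at hy
      simpa using hy
    · intro a _ b _ hab
      exact Fin.val_injective hab
    · intro a ha
      simp only [Finset.mem_range] at ha
      exact ⟨⟨a, lt_of_lt_of_le ha h⟩, by simp [ha], rfl⟩
  simpa using this

/-- **Proposition (only-if direction).** If the reduced bipartite graph with degree
sequence `d 1 ≤ ⋯ ≤ d k` has a star-forest ASD with centers in `X`, then there is an
ascending matrix `A ∈ N(d, (1,…,n))` whose associated bipartite multigraph admits a
sequential coloring for `X`. -/
theorem statement3 (n k : ℕ) (hn : 1 ≤ n) (d : ℕ → ℕ)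
    (hpos : ∀ i, 1 ≤ i → i ≤ k → 1 ≤ d i)
    (hmono : ∀ i j, 1 ≤ i → i ≤ j → j ≤ k → d i ≤ d j)
    (hsum : ∑ i ∈ Finset.Icc 1 k, d i = n * (n + 1) / 2)
    (hASD : ∃ F : Fin n → Finset (Fin k × Fin (d k)),
      StarForestASD (reducedEdges k d) F) :
    ∃ A : Matrix (Fin k) (Fin n) ℕ,
      (∀ i : Fin k, ∑ j, A i j = d ((i : ℕ) + 1)) ∧
      (∀ j : Fin n, ∑ i, A i j = (j : ℕ) + 1) ∧
      AscendingCols A ∧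
      ∃ S : Fin k → Fin n → Finset ℕ,
        SeqColoring A (fun i => d ((i : ℕ) + 1)) S := by
  obtain ⟨F, hdisj, hunion, hcard, hSF, hiso⟩ := hASD
  have hdile : ∀ i : Fin k, d ((i : ℕ) + 1) ≤ d k := fun i =>
    hmono _ _ (by omega) (by have := i.isLt; omega) le_rfl
  have hmemE : ∀ (i : Fin k) (y : Fin (d k)),
      ((i, y) ∈ reducedEdges k d ↔ (y : ℕ) + 1 ≤ d ((i : ℕ) + 1)) := by
    intro i y; simp [reducedEdges]
  -- row degrees in the reduced graph
  have hXdegE : ∀ i : Fin k, Xdeg (reducedEdges k d) i = d ((i : ℕ) + 1) := by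
    intro i
    rw [Xdeg_eq]
    have : (univ.filter fun y : Fin (d k) => (i, y) ∈ reducedEdges k d)
        = univ.filter fun y : Fin (d k) => (y : ℕ) < d ((i : ℕ) + 1) := by
      apply Finset.filter_congr
      intro y _
      rw [hmemE]
      omega
    rw [this, card_fin_lt (hdile i)]
  refine ⟨Matrix.of fun i j => Xdeg (F j) i, ?_, ?_, ?_, ?_⟩
  · -- row sums
    intro i
    have h1 : Xdeg (reducedEdges k d) i = ∑ j, Xdeg (F j) i := by
      rw [← hunion]
      unfold Xdeg
      rw [Finset.filter_biUnion, Finset.card_biUnion]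
      intro a _ b _ hab
      exact Finset.disjoint_filter_filter (hdisj a b hab)
    rw [← hXdegE i, h1]
    rfl
  · -- column sums
    intro j
    have h1 : (F j).card = ∑ i, ((F j).filter fun e => e.1 = i).card :=
      Finset.card_eq_sum_card_fiberwise (fun e _ => Finset.mem_univ e.1)
    have := hcard j
    rw [h1] at this
    exact this
  · -- ascending columns
    intro j hj
    apply prec_of_counts
    intro t
    exact count_le (hSF _) (hSF _) (hiso j hj) t
  · -- sequential coloring
    refine ⟨fun i j => ((F j).filter fun e => e.1 = i).image fun e => (e.2 : ℕ) + 1,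
      ?_, ?_, ?_, ?_⟩
    · intro i j
      rw [Finset.card_image_of_injOn]
      · rfl
      intro e1 h1 e2 h2 h12
      simp only [Finset.coe_filter, Set.mem_setOf_eq] at h1 h2
      have h12' : (e1.2 : ℕ) + 1 = (e2.2 : ℕ) + 1 := h12
      exact Prod.ext (h1.2.trans h2.2.symm) (Fin.val_injective (by omega))
    · intro j i i' hne
      rw [Finset.disjoint_left]
      intro c hc hc'
      simp only [Finset.mem_image, Finset.mem_filter] at hc hc'
      obtain ⟨⟨a, b⟩, ⟨hmem, ha⟩, hcc⟩ := hc
      obtain ⟨⟨a', b'⟩, ⟨hmem', ha'⟩, hcc'⟩ := hc'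
      subst ha; subst ha'
      obtain rfl : b = b' := Fin.val_injective (by simp at hcc hcc'; omega)
      have h2le := two_le_Ydeg hmem hmem' hne
      have := hSF j b
      omega
    · intro i j j' hne
      rw [Finset.disjoint_left]
      intro c hc hc'
      simp only [Finset.mem_image, Finset.mem_filter] at hc hc'
      obtain ⟨⟨a, b⟩, ⟨hmem, ha⟩, hcc⟩ := hc
      obtain ⟨⟨a', b'⟩, ⟨hmem', ha'⟩, hcc'⟩ := hc'
      subst ha; subst ha'
      obtain rfl : b = b' := Fin.val_injective (by simp at hcc hcc'; omega)
      exact Finset.disjoint_left.1 (hdisj j j' hne) hmem hmem'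
    · intro i
      ext c
      simp only [Finset.mem_biUnion, Finset.mem_image, Finset.mem_filter,
        Finset.mem_univ, true_and, Finset.mem_Icc]
      constructor
      · rintro ⟨j, ⟨a, b⟩, ⟨hmem, rfl⟩, rfl⟩
        have : (a, b) ∈ reducedEdges k d := by
          rw [← hunion]
          exact Finset.mem_biUnion.2 ⟨j, Finset.mem_univ j, hmem⟩
        rw [hmemE] at this
        exact ⟨Nat.le_add_left 1 _, this⟩
      · rintro ⟨hc1, hc2⟩
        have hcm : c - 1 < d k := by
          have := hdile i
          omega
        have hmem : (i, (⟨c - 1, hcm⟩ : Fin (d k))) ∈ reducedEdges k d := by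
          rw [hmemE]
          simp; omega
        rw [← hunion] at hmem
        obtain ⟨j, -, hj⟩ := Finset.mem_biUnion.1 hmem
        exact ⟨j, (i, ⟨c - 1, hcm⟩), ⟨hj, rfl⟩, by simp; omega⟩
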